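/- arXiv:2601.07538 — 5 statements merged into one kernel-verified Lean document; each statement's English description precedes it below -/
import Mathlib

section
/- Let x, y, z be nonzero elements of a division ring R satisfying xyz = -1. Then the following three equations are equivalent: x + y⁻¹ = 1, y + z⁻¹ = 1, and z + x⁻¹ = 1. -/
lemma step_aux {R : Type*} [DivisionRing R] (x y z : R)
    (hx : x ≠ 0) (hy : y ≠ 0) (h : x * y * z = -1) (hxy : x + y⁻¹ = 1) :
    y + z⁻¹ = 1 := by
  have hxyv : x * y = y - 1 := by
    have := congrArg (· * y) hxy
    simp only [add_mul, inv_mul_cancel₀ hy, one_mul] at this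
    exact eq_sub_of_add_eq this
  have hne : y - 1 ≠ 0 := by
    rw [← hxyv]; exact mul_ne_zero hx hy
  have hzv : z = -(y - 1)⁻¹ := by
    have : (y - 1)⁻¹ * (x * y * z) = (y - 1)⁻¹ * (-1) := by rw [h]
    rw [hxyv] at this
    rw [← mul_assoc, inv_mul_cancel₀ hne, one_mul, mul_neg_one] at this
    exact this
  rw [hzv, inv_neg, inv_inv, neg_sub]
  abel

/-- Let `x, y, z` be nonzero elements of a division ring `R`
satisfying `x * y * z = -1`. Then the three equations `x + y⁻¹ = 1`,
`y + z⁻¹ = 1`, and `z + x⁻¹ = 1` are equivalent. -/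
theorem statement_0 {R : Type*} [DivisionRing R] (x y z : R)
    (hx : x ≠ 0) (hy : y ≠ 0) (hz : z ≠ 0) (h : x * y * z = -1) :
    (x + y⁻¹ = 1 ↔ y + z⁻¹ = 1) ∧ (y + z⁻¹ = 1 ↔ z + x⁻¹ = 1) ∧
      (x + y⁻¹ = 1 ↔ z + x⁻¹ = 1) := by
  have cyc : ∀ a b c : R, a ≠ 0 → a * b * c = -1 → b * c * a = -1 := by
    intro a b c ha hab
    have : a⁻¹ * (a * b * c) * a = a⁻¹ * (-1) * a := by rw [hab]
    rw [← mul_assoc, ← mul_assoc, inv_mul_cancel₀ ha, one_mul,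
      mul_neg_one, neg_mul, inv_mul_cancel₀ ha] at this
    rw [mul_assoc] at this ⊢
    exact this
  have h2 := cyc x y z hx h
  have h3 := cyc y z x hy h2
  have i1 := step_aux x y z hx hy h
  have i2 := step_aux y z x hy hz h2
  have i3 := step_aux z x y hz hx h3
  exact ⟨⟨i1, fun hq => i3 (i2 hq)⟩, ⟨i2, fun hq => i1 (i3 hq)⟩, ⟨fun hq => i2 (i1 hq), i3⟩⟩
end

section
/- Under the cube monomial relations, one has the conjugation identity b₂·(a₄b₂ + (c₃c₁)⁻¹)·b₂⁻¹ = b₂a₄ + (c₄c₂)⁻¹. Consequently the equation a₄b₂ + (c₃c₁)⁻¹ = 1 holds if and only if the equation b₂a₄ + (c₄c₂)⁻¹ = 1 holds. -/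
/-- Under the cube monomial relations, one has the conjugation
identity `b₂·(a₄b₂ + (c₃c₁)⁻¹)·b₂⁻¹ = b₂a₄ + (c₄c₂)⁻¹`; consequently
`a₄b₂ + (c₃c₁)⁻¹ = 1` iff `b₂a₄ + (c₄c₂)⁻¹ = 1`. -/
theorem statement_2 {R : Type*} [DivisionRing R]
    (a₁ a₂ a₃ a₄ b₁ b₂ b₃ b₄ c₁ c₂ c₃ c₄ : R)
    (ha₁ : a₁ ≠ 0) (ha₂ : a₂ ≠ 0) (ha₃ : a₃ ≠ 0) (ha₄ : a₄ ≠ 0)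
    (hb₁ : b₁ ≠ 0) (hb₂ : b₂ ≠ 0) (hb₃ : b₃ ≠ 0) (hb₄ : b₄ ≠ 0)
    (hc₁ : c₁ ≠ 0) (hc₂ : c₂ ≠ 0) (hc₃ : c₃ ≠ 0) (hc₄ : c₄ ≠ 0)
    (h1 : a₄ * a₁ * c₁ = -1) (h2 : b₂ * b₁ * c₂ = -1)
    (h3 : a₂ * a₃ * c₃ = -1) (h4 : b₄ * b₃ * c₄ = -1)
    (h5 : b₁ * b₄ * c₁ = -1) (h6 : a₁ * a₂ * c₂ = -1)
    (h7 : b₃ * b₂ * c₃ = -1) (h8 : a₃ * a₄ * c₄ = -1) :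
    b₂ * (a₄ * b₂ + (c₃ * c₁)⁻¹) * b₂⁻¹ = b₂ * a₄ + (c₄ * c₂)⁻¹ ∧
      (a₄ * b₂ + (c₃ * c₁)⁻¹ = 1 ↔ b₂ * a₄ + (c₄ * c₂)⁻¹ = 1) := by
  have e3 : c₃ = (b₃ * b₂)⁻¹ * (-1) := by
    rw [← h7, ← mul_assoc, inv_mul_cancel₀ (mul_ne_zero hb₃ hb₂), one_mul]
  have e1 : c₁ = (b₁ * b₄)⁻¹ * (-1) := by
    rw [← h5, ← mul_assoc, inv_mul_cancel₀ (mul_ne_zero hb₁ hb₄), one_mul]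
  have e2 : c₂ = (b₂ * b₁)⁻¹ * (-1) := by
    rw [← h2, ← mul_assoc, inv_mul_cancel₀ (mul_ne_zero hb₂ hb₁), one_mul]
  have e4 : c₄ = (b₄ * b₃)⁻¹ * (-1) := by
    rw [← h4, ← mul_assoc, inv_mul_cancel₀ (mul_ne_zero hb₄ hb₃), one_mul]
  have key : c₄ * c₂ * b₂ = b₂ * (c₃ * c₁) := by
    rw [e1, e2, e3, e4]
    simp [mul_inv_rev, mul_assoc, hb₁, hb₂, hb₃, hb₄]
  have hcc31 : c₃ * c₁ ≠ 0 := mul_ne_zero hc₃ hc₁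
  have hcc42 : c₄ * c₂ ≠ 0 := mul_ne_zero hc₄ hc₂
  have key2 : b₂ * (c₃ * c₁)⁻¹ * b₂⁻¹ = (c₄ * c₂)⁻¹ := by
    rw [e1, e2, e3, e4]
    simp [mul_inv_rev, mul_assoc, hb₁, hb₂, hb₃, hb₄]
  have conj : b₂ * (a₄ * b₂ + (c₃ * c₁)⁻¹) * b₂⁻¹ = b₂ * a₄ + (c₄ * c₂)⁻¹ := by
    rw [mul_add, add_mul, key2]
    congr 1
    simp [mul_assoc, mul_inv_cancel₀ hb₂]
  refine ⟨conj, ?_, ?_⟩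
  · intro h
    rw [← conj, h, mul_one, mul_inv_cancel₀ hb₂]
  · intro h
    have := conj
    rw [h] at this
    have h2' : b₂ * (a₄ * b₂ + (c₃ * c₁)⁻¹) = b₂ := by
      have := congrArg (· * b₂) this
      simpa [mul_assoc, inv_mul_cancel₀ hb₂] using this
    have := congrArg (b₂⁻¹ * ·) h2'
    simpa [← mul_assoc, inv_mul_cancel₀ hb₂] using this
end

section
/- Under the cube monomial relations, one has the conjugation identity b₄·(a₂b₄ + (c₁c₃)⁻¹)·b₄⁻¹ = b₄a₂ + (c₂c₄)⁻¹. Consequently the equation a₂b₄ + (c₁c₃)⁻¹ = 1 holds if and only if the equation b₄a₂ + (c₂c₄)⁻¹ = 1 holds. -/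
/-- Under the cube monomial relations, one has the conjugation
identity `b₄·(a₂b₄ + (c₁c₃)⁻¹)·b₄⁻¹ = b₄a₂ + (c₂c₄)⁻¹`; consequently
`a₂b₄ + (c₁c₃)⁻¹ = 1` iff `b₄a₂ + (c₂c₄)⁻¹ = 1`. -/
theorem statement_3 {R : Type*} [DivisionRing R]
    (a₁ a₂ a₃ a₄ b₁ b₂ b₃ b₄ c₁ c₂ c₃ c₄ : R)
    (ha₁ : a₁ ≠ 0) (ha₂ : a₂ ≠ 0) (ha₃ : a₃ ≠ 0) (ha₄ : a₄ ≠ 0)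
    (hb₁ : b₁ ≠ 0) (hb₂ : b₂ ≠ 0) (hb₃ : b₃ ≠ 0) (hb₄ : b₄ ≠ 0)
    (hc₁ : c₁ ≠ 0) (hc₂ : c₂ ≠ 0) (hc₃ : c₃ ≠ 0) (hc₄ : c₄ ≠ 0)
    (h1 : a₄ * a₁ * c₁ = -1) (h2 : b₂ * b₁ * c₂ = -1)
    (h3 : a₂ * a₃ * c₃ = -1) (h4 : b₄ * b₃ * c₄ = -1)
    (h5 : b₁ * b₄ * c₁ = -1) (h6 : a₁ * a₂ * c₂ = -1)
    (h7 : b₃ * b₂ * c₃ = -1) (h8 : a₃ * a₄ * c₄ = -1) :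
    b₄ * (a₂ * b₄ + (c₁ * c₃)⁻¹) * b₄⁻¹ = b₄ * a₂ + (c₂ * c₄)⁻¹ ∧
      (a₂ * b₄ + (c₁ * c₃)⁻¹ = 1 ↔ b₄ * a₂ + (c₂ * c₄)⁻¹ = 1) := by

  have e1 : c₁⁻¹ = -(b₁ * b₄) := by
    apply inv_eq_of_mul_eq_one_left
    rw [neg_mul, h5, neg_neg]
  have e3 : c₃⁻¹ = -(b₃ * b₂) := by
    apply inv_eq_of_mul_eq_one_left
    rw [neg_mul, h7, neg_neg]
  have e2 : c₂⁻¹ = -(b₂ * b₁) := by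
    apply inv_eq_of_mul_eq_one_left
    rw [neg_mul, h2, neg_neg]
  have e4 : c₄⁻¹ = -(b₄ * b₃) := by
    apply inv_eq_of_mul_eq_one_left
    rw [neg_mul, h4, neg_neg]
  have key : b₄ * (c₁ * c₃)⁻¹ * b₄⁻¹ = (c₂ * c₄)⁻¹ := by
    rw [mul_inv_rev, mul_inv_rev, e1, e2, e3, e4]
    have hb : b₄ * b₄⁻¹ = 1 := mul_inv_cancel₀ hb₄
    calc b₄ * (-(b₃ * b₂) * -(b₁ * b₄)) * b₄⁻¹
        = b₄ * (b₃ * b₂ * (b₁ * (b₄ * b₄⁻¹))) := by noncomm_ring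
      _ = -(b₄ * b₃) * -(b₂ * b₁) := by rw [hb]; noncomm_ring
  have conj : b₄ * (a₂ * b₄ + (c₁ * c₃)⁻¹) * b₄⁻¹ = b₄ * a₂ + (c₂ * c₄)⁻¹ := by
    rw [mul_add, add_mul, key]
    congr 1
    rw [mul_assoc, mul_assoc, mul_inv_cancel₀ hb₄, mul_one]
  refine ⟨conj, ?_, ?_⟩
  · intro h
    rw [h, mul_one, mul_inv_cancel₀ hb₄] at conj
    exact conj.symm
  · intro h
    rw [h] at conj
    have cancel : ∀ x : R, b₄⁻¹ * (b₄ * x * b₄⁻¹) * b₄ = x := fun x => by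
      rw [mul_assoc b₄⁻¹, mul_assoc (b₄ * x), inv_mul_cancel₀ hb₄, mul_one,
        ← mul_assoc, inv_mul_cancel₀ hb₄, one_mul]
    calc a₂ * b₄ + (c₁ * c₃)⁻¹
        = b₄⁻¹ * (b₄ * (a₂ * b₄ + (c₁ * c₃)⁻¹) * b₄⁻¹) * b₄ := (cancel _).symm
      _ = b₄⁻¹ * 1 * b₄ := by rw [conj]
      _ = 1 := by rw [mul_one, inv_mul_cancel₀ hb₄]
end

section
/- For the non-commutative two-by-two move one has bᵢ·b_{i+1} = -(aᵢ·a_{i+1})⁻¹ for every i ∈ ℤ/4ℤ; that is, b₁b₂ = -(a₁a₂)⁻¹, b₂b₃ = -(a₂a₃)⁻¹, b₃b₄ = -(a₃a₄)⁻¹, and b₄b₁ = -(a₄a₁)⁻¹. -/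
private lemma key1 {R : Type*} [DivisionRing R] (u v w : R)
    (hu : u ≠ 0) (hv : v ≠ 0) (hw : w ≠ 0)
    (h : 1 - u*v*w ≠ 0) (h' : 1 - v*w*u ≠ 0) :
    (1 - (u*v*w)⁻¹) * u * ((1 - v*w*u)⁻¹ * v) = -w⁻¹ := by
  have hX : u*v*w ≠ 0 := mul_ne_zero (mul_ne_zero hu hv) hw
  have e1 : u * (1 - v*w*u)⁻¹ = (1 - u*v*w)⁻¹ * u := by
    refine mul_left_cancel₀ h ?_
    rw [← mul_assoc, ← mul_assoc, mul_inv_cancel₀ h, one_mul]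
    have e : (1 - u*v*w) * u = u * (1 - v*w*u) := by noncomm_ring
    rw [e, mul_assoc, mul_inv_cancel₀ h', mul_one]
  have e2 : 1 - (u*v*w)⁻¹ = -((u*v*w)⁻¹ * (1 - u*v*w)) := by
    rw [mul_sub, mul_one, inv_mul_cancel₀ hX, neg_sub]
  calc (1 - (u*v*w)⁻¹) * u * ((1 - v*w*u)⁻¹ * v)
      = (1 - (u*v*w)⁻¹) * (u * (1 - v*w*u)⁻¹) * v := by
        simp only [mul_assoc]
    _ = (1 - (u*v*w)⁻¹) * ((1 - u*v*w)⁻¹ * u) * v := by rw [e1]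
    _ = -((u*v*w)⁻¹ * (1 - u*v*w) * ((1 - u*v*w)⁻¹ * u) * v) := by
        rw [e2, neg_mul, neg_mul]
    _ = -((u*v*w)⁻¹ * (u * v)) := by
        rw [mul_assoc ((u*v*w)⁻¹), ← mul_assoc (1 - u*v*w), mul_inv_cancel₀ h,
          one_mul, mul_assoc]
    _ = -w⁻¹ := by
        rw [mul_inv_rev, mul_assoc, inv_mul_cancel₀ (mul_ne_zero hu hv), mul_one]

private lemma key2 {R : Type*} [DivisionRing R] (u v w : R)
    (hu : u ≠ 0) (hv : v ≠ 0) (hw : w ≠ 0)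
    (h : 1 - u*v*w ≠ 0) (h' : 1 - v*w*u ≠ 0) :
    (1 - u*v*w)⁻¹ * u * ((1 - (v*w*u)⁻¹) * v) = -w⁻¹ := by
  have hY : v*w*u ≠ 0 := mul_ne_zero (mul_ne_zero hv hw) hu
  have e2 : 1 - (v*w*u)⁻¹ = -((v*w*u)⁻¹ * (1 - v*w*u)) := by
    rw [mul_sub, mul_one, inv_mul_cancel₀ hY, neg_sub]
  have e3 : (1 - v*w*u) * v = v * (1 - w*u*v) := by noncomm_ring
  have e4 : u * (v*w*u)⁻¹ * v = w⁻¹ := by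
    rw [mul_inv_rev, mul_inv_rev, ← mul_assoc, ← mul_assoc,
      mul_inv_cancel₀ hu, one_mul, mul_assoc, inv_mul_cancel₀ hv, mul_one]
  have e5 : w⁻¹ * (1 - w*u*v) = (1 - u*v*w) * w⁻¹ := by
    rw [mul_sub, sub_mul, mul_one, one_mul, ← mul_assoc,
      ← mul_assoc, inv_mul_cancel₀ hw, one_mul, mul_assoc, mul_assoc,
      mul_inv_cancel₀ hw, mul_one]
  calc (1 - u*v*w)⁻¹ * u * ((1 - (v*w*u)⁻¹) * v)
      = -((1 - u*v*w)⁻¹ * u * ((v*w*u)⁻¹ * ((1 - v*w*u) * v))) := by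
        rw [e2]; simp only [neg_mul, mul_neg, mul_assoc]
    _ = -((1 - u*v*w)⁻¹ * (u * (v*w*u)⁻¹ * v) * (1 - w*u*v)) := by
        rw [e3]; simp only [mul_assoc]
    _ = -((1 - u*v*w)⁻¹ * ((1 - u*v*w) * w⁻¹)) := by rw [e4, mul_assoc, e5]
    _ = -w⁻¹ := by rw [← mul_assoc, inv_mul_cancel₀ h, one_mul]

/-- For the non-commutative two-by-two move one has
`bᵢ·b_{i+1} = -(aᵢ·a_{i+1})⁻¹` for every `i ∈ ℤ/4ℤ`. -/
theorem statement_7 {R : Type*} [DivisionRing R]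
    (a₁ a₂ a₃ a₄ A₁ A₂ A₃ A₄ b₁ b₂ b₃ b₄ : R)
    (ha₁ : a₁ ≠ 0) (ha₂ : a₂ ≠ 0) (ha₃ : a₃ ≠ 0) (ha₄ : a₄ ≠ 0)
    (hA₁ : A₁ = a₁ * a₂ * a₃ * a₄) (hA₂ : A₂ = a₂ * a₃ * a₄ * a₁)
    (hA₃ : A₃ = a₃ * a₄ * a₁ * a₂) (hA₄ : A₄ = a₄ * a₁ * a₂ * a₃)
    (h₁ : 1 - A₁ ≠ 0) (h₂ : 1 - A₂ ≠ 0) (h₃ : 1 - A₃ ≠ 0) (h₄ : 1 - A₄ ≠ 0)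
    (hb₁ : b₁ = (1 - A₃⁻¹) * a₃) (hb₂ : b₂ = (1 - A₄)⁻¹ * a₄)
    (hb₃ : b₃ = (1 - A₁⁻¹) * a₁) (hb₄ : b₄ = (1 - A₂)⁻¹ * a₂) :
    b₁ * b₂ = -(a₁ * a₂)⁻¹ ∧ b₂ * b₃ = -(a₂ * a₃)⁻¹ ∧
      b₃ * b₄ = -(a₃ * a₄)⁻¹ ∧ b₄ * b₁ = -(a₄ * a₁)⁻¹ := by
  subst hA₁ hA₂ hA₃ hA₄ hb₁ hb₂ hb₃ hb₄
  refine ⟨?_, ?_, ?_, ?_⟩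
  · have := key1 a₃ a₄ (a₁ * a₂) ha₃ ha₄ (mul_ne_zero ha₁ ha₂)
      (by simpa only [mul_assoc] using h₃) (by simpa only [mul_assoc] using h₄)
    simp only [mul_assoc] at this ⊢
    exact this
  · have := key2 a₄ a₁ (a₂ * a₃) ha₄ ha₁ (mul_ne_zero ha₂ ha₃)
      (by simpa only [mul_assoc] using h₄) (by simpa only [mul_assoc] using h₁)
    simp only [mul_assoc] at this ⊢
    exact this
  · have := key1 a₁ a₂ (a₃ * a₄) ha₁ ha₂ (mul_ne_zero ha₃ ha₄)
      (by simpa only [mul_assoc] using h₁) (by simpa only [mul_assoc] using h₂)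
    simp only [mul_assoc] at this ⊢
    exact this
  · have := key2 a₂ a₃ (a₄ * a₁) ha₂ ha₃ (mul_ne_zero ha₄ ha₁)
      (by simpa only [mul_assoc] using h₂) (by simpa only [mul_assoc] using h₃)
    simp only [mul_assoc] at this ⊢
    exact this
end

section
/- The square of the non-commutative two-by-two move is the identity up to cyclic relabeling: setting (x₁, x₂, x₃, x₄) := (b₂, b₃, b₄, b₁) and Xᵢ := xᵢ·x_{i+1}·x_{i+2}·x_{i+3} (indices mod 4), one has 1 - Xᵢ ≠ 0 for all i, and applying the same formulas, (1 - X₃⁻¹)x₃ = a₂, (1 - X₄)⁻¹x₄ = a₃, (1 - X₁⁻¹)x₁ = a₄, and (1 - X₂)⁻¹x₂ = a₁. -/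
section
variable {R : Type*} [DivisionRing R]

private lemma s9_conj_inv {X Y c : R} (h : X * c = c * Y) (hX : X ≠ 0) (hY : Y ≠ 0) :
    c * Y⁻¹ = X⁻¹ * c := by
  have : X⁻¹ * (X * c) * Y⁻¹ = X⁻¹ * (c * Y) * Y⁻¹ := by rw [h]
  rw [← mul_assoc, inv_mul_cancel₀ hX, one_mul] at this
  rw [mul_assoc, mul_assoc, mul_inv_cancel₀ hY, mul_one] at this
  exact this

private lemma s9_neg1 {A : R} (hA : A ≠ 0) (h1 : 1 - A ≠ 0) : (1 - A⁻¹) * (1 - A)⁻¹ = -A⁻¹ := by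
  have e : (1 - A⁻¹) = -A⁻¹ * (1 - A) := by
    rw [neg_mul, mul_sub, mul_one, inv_mul_cancel₀ hA, neg_sub]
  rw [e, mul_assoc, mul_inv_cancel₀ h1, mul_one]

private lemma s9_neg2 {A : R} (hA : A ≠ 0) (h : 1 - A ≠ 0) :
    (1 - A)⁻¹ * (1 - A⁻¹) = -A⁻¹ := by
  have e : (1 - A⁻¹) = (1 - A) * -A⁻¹ := by
    rw [mul_neg, sub_mul, one_mul, mul_inv_cancel₀ hA, neg_sub]
  rw [e, ← mul_assoc, inv_mul_cancel₀ h, one_mul]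

private lemma s9_inv_ne {A : R} (hA : A ≠ 0) (h : 1 - A ≠ 0) : 1 - A⁻¹ ≠ 0 := by
  have e : (1 - A⁻¹) = (1 - A) * -A⁻¹ := by
    rw [mul_neg, sub_mul, one_mul, mul_inv_cancel₀ hA, neg_sub]
  rw [e]
  exact mul_ne_zero h (neg_ne_zero.mpr (inv_ne_zero hA))

private lemma s9_F {a b c d : R} (ha : a ≠ 0) (hb : b ≠ 0) (hc : c ≠ 0) (hd : d ≠ 0)
    (hp : 1 - a*b*c*d ≠ 0) (hq : 1 - b*c*d*a ≠ 0) (hr : 1 - c*d*a*b ≠ 0)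
    (hs : 1 - d*a*b*c ≠ 0) :
    ((1 - (c*d*a*b)⁻¹) * c) * ((1 - (d*a*b*c))⁻¹ * d) *
      ((1 - (a*b*c*d)⁻¹) * a) * ((1 - (b*c*d*a))⁻¹ * b) = (c*d*a*b)⁻¹ := by
  have hABCD : a*b*c*d ≠ 0 := by
    exact mul_ne_zero (mul_ne_zero (mul_ne_zero ha hb) hc) hd
  have hCDAB : c*d*a*b ≠ 0 := by
    exact mul_ne_zero (mul_ne_zero (mul_ne_zero hc hd) ha) hb
  have hC : c * (1 - d*a*b*c)⁻¹ = (1 - c*d*a*b)⁻¹ * c :=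
    s9_conj_inv (by noncomm_ring) hr hs
  have hA : a * (1 - b*c*d*a)⁻¹ = (1 - a*b*c*d)⁻¹ * a :=
    s9_conj_inv (by noncomm_ring) hp hq
  calc ((1 - (c*d*a*b)⁻¹) * c) * ((1 - (d*a*b*c))⁻¹ * d) *
      ((1 - (a*b*c*d)⁻¹) * a) * ((1 - (b*c*d*a))⁻¹ * b)
      = (1 - (c*d*a*b)⁻¹) * (c * (1 - (d*a*b*c))⁻¹) * d *
        ((1 - (a*b*c*d)⁻¹) * (a * (1 - (b*c*d*a))⁻¹)) * b := by
        simp only [mul_assoc]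
    _ = ((1 - (c*d*a*b)⁻¹) * (1 - c*d*a*b)⁻¹) * (c * (d *
        (((1 - (a*b*c*d)⁻¹) * (1 - a*b*c*d)⁻¹) * (a * b)))) := by
        rw [hC, hA]; simp only [mul_assoc]
    _ = (-(c*d*a*b)⁻¹) * (c * (d * ((-(a*b*c*d)⁻¹) * (a * b)))) := by
        rw [s9_neg1 hCDAB hr, s9_neg1 hABCD hp]
    _ = (c*d*a*b)⁻¹ := by
        simp [mul_inv_rev, mul_assoc, ha, hb, hc, hd, inv_mul_cancel₀,
          mul_inv_cancel₀ hd, mul_inv_cancel₀ hc]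

end

section
variable {R : Type*} [DivisionRing R]

private lemma s9_G {a b c d : R} (ha : a ≠ 0) (hb : b ≠ 0) (hc : c ≠ 0) (hd : d ≠ 0)
    (_hp : 1 - a*b*c*d ≠ 0) (hq : 1 - b*c*d*a ≠ 0) (_hr : 1 - c*d*a*b ≠ 0)
    (hs : 1 - d*a*b*c ≠ 0) :
    ((1 - (d*a*b*c))⁻¹ * d) * ((1 - (a*b*c*d)⁻¹) * a) *
      ((1 - (b*c*d*a))⁻¹ * b) * ((1 - (c*d*a*b)⁻¹) * c) = (d*a*b*c)⁻¹ := by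
  have hABCD : a*b*c*d ≠ 0 :=
    mul_ne_zero (mul_ne_zero (mul_ne_zero ha hb) hc) hd
  have hDABC : d*a*b*c ≠ 0 :=
    mul_ne_zero (mul_ne_zero (mul_ne_zero hd ha) hb) hc
  have hBCDA : b*c*d*a ≠ 0 :=
    mul_ne_zero (mul_ne_zero (mul_ne_zero hb hc) hd) ha
  have hCDAB : c*d*a*b ≠ 0 :=
    mul_ne_zero (mul_ne_zero (mul_ne_zero hc hd) ha) hb
  have hD : d * (1 - (a*b*c*d)⁻¹) = (1 - (d*a*b*c)⁻¹) * d := by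
    have := s9_conj_inv (X := d*a*b*c) (Y := a*b*c*d) (c := d)
      (by noncomm_ring) hDABC hABCD
    rw [mul_sub, sub_mul, mul_one, one_mul, this]
  have hB : b * (1 - (c*d*a*b)⁻¹) = (1 - (b*c*d*a)⁻¹) * b := by
    have := s9_conj_inv (X := b*c*d*a) (Y := c*d*a*b) (c := b)
      (by noncomm_ring) hBCDA hCDAB
    rw [mul_sub, sub_mul, mul_one, one_mul, this]
  calc ((1 - (d*a*b*c))⁻¹ * d) * ((1 - (a*b*c*d)⁻¹) * a) *
      ((1 - (b*c*d*a))⁻¹ * b) * ((1 - (c*d*a*b)⁻¹) * c)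
      = (1 - (d*a*b*c))⁻¹ * (d * (1 - (a*b*c*d)⁻¹)) * a *
        ((1 - (b*c*d*a))⁻¹ * (b * (1 - (c*d*a*b)⁻¹))) * c := by
        simp only [mul_assoc]
    _ = ((1 - (d*a*b*c))⁻¹ * (1 - (d*a*b*c)⁻¹)) * (d * (a *
        (((1 - (b*c*d*a))⁻¹ * (1 - (b*c*d*a)⁻¹)) * (b * c)))) := by
        rw [hD, hB]; simp only [mul_assoc]
    _ = (-(d*a*b*c)⁻¹) * (d * (a * ((-(b*c*d*a)⁻¹) * (b * c)))) := by
        rw [s9_neg2 hDABC hs, s9_neg2 hBCDA hq]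
    _ = (d*a*b*c)⁻¹ := by
        simp [mul_inv_rev, mul_assoc, ha, hb, hc, hd]
end


/-- The square of the non-commutative two-by-two move is the
identity up to cyclic relabeling: setting `(x₁,x₂,x₃,x₄) := (b₂,b₃,b₄,b₁)` and
`Xᵢ := xᵢx_{i+1}x_{i+2}x_{i+3}`, one has `1 - Xᵢ ≠ 0` for all `i` and, applying
the same formulas, `(1 - X₃⁻¹)x₃ = a₂`, `(1 - X₄)⁻¹x₄ = a₃`,
`(1 - X₁⁻¹)x₁ = a₄`, `(1 - X₂)⁻¹x₂ = a₁`. -/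
theorem statement_9 {R : Type*} [DivisionRing R]
    (a₁ a₂ a₃ a₄ A₁ A₂ A₃ A₄ b₁ b₂ b₃ b₄ X₁ X₂ X₃ X₄ : R)
    (ha₁ : a₁ ≠ 0) (ha₂ : a₂ ≠ 0) (ha₃ : a₃ ≠ 0) (ha₄ : a₄ ≠ 0)
    (hA₁ : A₁ = a₁ * a₂ * a₃ * a₄) (hA₂ : A₂ = a₂ * a₃ * a₄ * a₁)
    (hA₃ : A₃ = a₃ * a₄ * a₁ * a₂) (hA₄ : A₄ = a₄ * a₁ * a₂ * a₃)
    (h₁ : 1 - A₁ ≠ 0) (h₂ : 1 - A₂ ≠ 0) (h₃ : 1 - A₃ ≠ 0) (h₄ : 1 - A₄ ≠ 0)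
    (hb₁ : b₁ = (1 - A₃⁻¹) * a₃) (hb₂ : b₂ = (1 - A₄)⁻¹ * a₄)
    (hb₃ : b₃ = (1 - A₁⁻¹) * a₁) (hb₄ : b₄ = (1 - A₂)⁻¹ * a₂)
    -- `(x₁, x₂, x₃, x₄) := (b₂, b₃, b₄, b₁)`, `Xᵢ := xᵢ·x_{i+1}·x_{i+2}·x_{i+3}`
    (hX₁ : X₁ = b₂ * b₃ * b₄ * b₁) (hX₂ : X₂ = b₃ * b₄ * b₁ * b₂)
    (hX₃ : X₃ = b₄ * b₁ * b₂ * b₃) (hX₄ : X₄ = b₁ * b₂ * b₃ * b₄) :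
    (1 - X₁ ≠ 0 ∧ 1 - X₂ ≠ 0 ∧ 1 - X₃ ≠ 0 ∧ 1 - X₄ ≠ 0) ∧
    ((1 - X₃⁻¹) * b₄ = a₂ ∧ (1 - X₄)⁻¹ * b₁ = a₃ ∧
      (1 - X₁⁻¹) * b₂ = a₄ ∧ (1 - X₂)⁻¹ * b₃ = a₁) := by
  subst hA₁ hA₂ hA₃ hA₄ hb₁ hb₂ hb₃ hb₄
  have n₁ : a₁ * a₂ * a₃ * a₄ ≠ 0 :=
    mul_ne_zero (mul_ne_zero (mul_ne_zero ha₁ ha₂) ha₃) ha₄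
  have n₂ : a₂ * a₃ * a₄ * a₁ ≠ 0 :=
    mul_ne_zero (mul_ne_zero (mul_ne_zero ha₂ ha₃) ha₄) ha₁
  have n₃ : a₃ * a₄ * a₁ * a₂ ≠ 0 :=
    mul_ne_zero (mul_ne_zero (mul_ne_zero ha₃ ha₄) ha₁) ha₂
  have n₄ : a₄ * a₁ * a₂ * a₃ ≠ 0 :=
    mul_ne_zero (mul_ne_zero (mul_ne_zero ha₄ ha₁) ha₂) ha₃
  have E1 : X₁ = (a₄ * a₁ * a₂ * a₃)⁻¹ := by
    rw [hX₁]; exact s9_G ha₁ ha₂ ha₃ ha₄ h₁ h₂ h₃ h₄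
  have E2 : X₂ = (a₁ * a₂ * a₃ * a₄)⁻¹ := by
    rw [hX₂]; exact s9_F ha₃ ha₄ ha₁ ha₂ h₃ h₄ h₁ h₂
  have E3 : X₃ = (a₂ * a₃ * a₄ * a₁)⁻¹ := by
    rw [hX₃]; exact s9_G ha₃ ha₄ ha₁ ha₂ h₃ h₄ h₁ h₂
  have E4 : X₄ = (a₃ * a₄ * a₁ * a₂)⁻¹ := by
    rw [hX₄]; exact s9_F ha₁ ha₂ ha₃ ha₄ h₁ h₂ h₃ h₄
  refine ⟨⟨?_, ?_, ?_, ?_⟩, ?_, ?_, ?_, ?_⟩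
  · rw [E1]; exact s9_inv_ne n₄ h₄
  · rw [E2]; exact s9_inv_ne n₁ h₁
  · rw [E3]; exact s9_inv_ne n₂ h₂
  · rw [E4]; exact s9_inv_ne n₃ h₃
  · rw [E3, inv_inv, ← mul_assoc, mul_inv_cancel₀ h₂, one_mul]
  · rw [E4, ← mul_assoc, inv_mul_cancel₀ (s9_inv_ne n₃ h₃), one_mul]
  · rw [E1, inv_inv, ← mul_assoc, mul_inv_cancel₀ h₄, one_mul]
  · rw [E2, ← mul_assoc, inv_mul_cancel₀ (s9_inv_ne n₁ h₁), one_mul]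
end
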